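/- Let g : U → ℂ be holomorphic with fixed point z₀, |g'(z₀)| = 1, and |log|g'(x)|| ≤ L·|x − z₀| near z₀. Then for every δ > 0 there exist λ ∈ (0,1) and r₀ > 0 such that for all n large enough, setting rₙ = r₀·exp(−nδ), for all i = 1,…,n: g^i(B(z₀, rₙ)) ⊆ B(z₀, rₙ·(1 + λⁿ)). -/

import Mathlib

set_option maxHeartbeats 1000000


open Metric Function

/-- self-reinforced inclusion for iterates on exponentially small discs. -/
theorem stmt_1 (U : Set ℂ) (hU : IsOpen U) (g : ℂ → ℂ)
    (hg : DifferentiableOn ℂ g U) (z₀ : ℂ) (hz₀ : z₀ ∈ U) (hfix : g z₀ = z₀)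
    (hder : ‖deriv g z₀‖ = 1) (L η : ℝ) (hL : 0 < L) (hη : 0 < η)
    (hlip : ∀ x ∈ ball z₀ η, |Real.log ‖deriv g x‖| ≤ L * ‖x - z₀‖) :
    ∀ δ > (0:ℝ), ∃ lam : ℝ, 0 < lam ∧ lam < 1 ∧ ∃ r₀ > (0:ℝ), ∃ n₀ : ℕ,
      ∀ n ≥ n₀, ∀ i : ℕ, 1 ≤ i → i ≤ n →
        g^[i] '' ball z₀ (r₀ * Real.exp (-(n:ℝ) * δ)) ⊆
          ball z₀ (r₀ * Real.exp (-(n:ℝ) * δ) * (1 + lam ^ n)) := by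
  intro δ hδ
  obtain ⟨ε, hε, hballU⟩ := Metric.isOpen_iff.mp hU z₀ hz₀
  set η' : ℝ := min η ε with hη'def
  have hη' : 0 < η' := lt_min hη hε
  clear_value η'
  set lam : ℝ := Real.exp (-(δ/2)) with hlamdef
  have hlam0 : 0 < lam := Real.exp_pos _
  have hlam1 : lam < 1 := Real.exp_lt_one_iff.mpr (by linarith)
  clear_value lam
  set r₀ : ℝ := η'/4 with hr₀def
  have hr₀ : 0 < r₀ := by rw [hr₀def]; positivity
  clear_value r₀
  refine ⟨lam, hlam0, hlam1, r₀, hr₀, ?_⟩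
  -- choose n₀ so that n * exp(-(δ/2)*n) ≤ (4*L*r₀)⁻¹ for n ≥ n₀
  have htend : Filter.Tendsto (fun n : ℕ => (n:ℝ) * Real.exp (-((δ/2) * n)))
      Filter.atTop (nhds 0) := by
    have h1 := Real.tendsto_pow_mul_exp_neg_atTop_nhds_zero 1
    have h2 : Filter.Tendsto (fun n : ℕ => (δ/2) * (n:ℝ)) Filter.atTop Filter.atTop :=
      (Filter.tendsto_const_mul_atTop_of_pos (by linarith)).2 tendsto_natCast_atTop_atTop
    have h3 := (h1.comp h2).const_mul (δ/2)⁻¹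
    simp only [Function.comp, pow_one, mul_zero] at h3
    convert h3 using 2 with n
    field_simp
  have hKpos : (0:ℝ) < (4*L*r₀)⁻¹ := by positivity
  obtain ⟨n₀, hn₀⟩ := Filter.eventually_atTop.mp (htend.eventually (gt_mem_nhds hKpos))
  refine ⟨n₀, ?_⟩
  intro n hn i hi1 hin
  set r : ℝ := r₀ * Real.exp (-(n:ℝ) * δ) with hrdef
  have hr : 0 < r := by rw [hrdef]; positivity
  clear_value r
  have hrle : r ≤ r₀ := by
    have hn0 : (0:ℝ) ≤ (n:ℝ) := Nat.cast_nonneg n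
    have h1 : Real.exp (-(n:ℝ) * δ) ≤ 1 := Real.exp_le_one_iff.mpr (by nlinarith)
    rw [hrdef]; nlinarith
  -- key numeric inequality : 4 * L * r * n ≤ lam ^ n
  have hlamn : lam ^ n = Real.exp (-(δ/2) * n) := by
    rw [hlamdef, mul_comm, Real.exp_nat_mul]
  have hexpsplit : Real.exp (-(n:ℝ) * δ) = Real.exp (-(δ/2) * n) * Real.exp (-(δ/2) * n) := by
    rw [← Real.exp_add]; ring_nf
  have hkey : 4 * L * r * n ≤ lam ^ n := by
    have h := le_of_lt (hn₀ n hn)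
    have hpos : (0:ℝ) < 4*L*r₀ := by positivity
    have hle : (n:ℝ) * Real.exp (-((δ/2) * n)) * (4*L*r₀) ≤ 1 := by
      calc (n:ℝ) * Real.exp (-((δ/2) * n)) * (4*L*r₀)
          ≤ (4*L*r₀)⁻¹ * (4*L*r₀) := mul_le_mul_of_nonneg_right h (le_of_lt hpos)
        _ = 1 := inv_mul_cancel₀ (ne_of_gt hpos)
    have hEpos : (0:ℝ) < Real.exp (-(δ/2) * n) := Real.exp_pos _
    rw [hlamn, hrdef, hexpsplit]
    calc 4 * L * (r₀ * (Real.exp (-(δ/2) * n) * Real.exp (-(δ/2) * n))) * n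
        = ((n:ℝ) * Real.exp (-((δ/2) * n)) * (4*L*r₀)) * Real.exp (-(δ/2) * n) := by
          ring_nf
      _ ≤ 1 * Real.exp (-(δ/2) * n) := by
          apply mul_le_mul_of_nonneg_right hle (le_of_lt hEpos)
      _ = Real.exp (-(δ/2) * n) := one_mul _
  have hlamn1 : lam ^ n ≤ 1 := pow_le_one₀ (le_of_lt hlam0) (le_of_lt hlam1)
  set s : ℝ := 2 * L * r * n with hsdef
  have hs0 : 0 ≤ s := by rw [hsdef]; positivity
  clear_value s
  have hs2 : 2 * s ≤ lam ^ n := by rw [hsdef]; linarith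
  have hshalf : s ≤ 1/2 := by nlinarith
  set c : ℝ := Real.exp (2 * L * r) with hcdef
  have hc0 : 0 < c := by rw [hcdef]; positivity
  have hc1 : 1 ≤ c := by rw [hcdef]; exact Real.one_le_exp (by positivity)
  clear_value c
  have hcn : c ^ n = Real.exp s := by
    rw [hcdef, ← Real.exp_nat_mul, hsdef]; ring_nf
  -- exp s ≤ 1 + 2s for 0 ≤ s ≤ 1/2
  have hexps : Real.exp s ≤ 1 + 2 * s := by
    have h1 : 1 - s ≤ Real.exp (-s) := by linarith [Real.add_one_le_exp (-s)]
    have h2 : Real.exp s * Real.exp (-s) = 1 := by rw [← Real.exp_add]; simp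
    nlinarith [Real.exp_pos s, Real.exp_pos (-s)]
  have hcn2 : c ^ n ≤ 1 + lam ^ n := by rw [hcn]; linarith
  have hcn3 : c ^ n ≤ 2 := by linarith
  -- domain inclusions
  have h2rη' : 2 * r < η' := by
    have : 2 * r ≤ 2 * r₀ := by linarith
    rw [hr₀def] at this; linarith
  have hη'ε : η' ≤ ε := by rw [hη'def]; exact min_le_right η ε
  have hη'η : η' ≤ η := by rw [hη'def]; exact min_le_left η ε
  have h2rε : 2 * r ≤ ε := le_of_lt (lt_of_lt_of_le h2rη' hη'ε)
  have h2rη : 2 * r ≤ η := le_of_lt (lt_of_lt_of_le h2rη' hη'η)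
  have hsubU : ball z₀ (2*r) ⊆ U := subset_trans (ball_subset_ball h2rε) hballU
  have hsubη : ball z₀ (2*r) ⊆ ball z₀ η := ball_subset_ball h2rη
  -- one-step contraction-with-error
  have hstep : ∀ ρ : ℝ, 0 < ρ → ρ ≤ 2*r → g '' ball z₀ ρ ⊆ ball z₀ (c * ρ) := by
    intro ρ hρ hρ2 w hw
    obtain ⟨z, hz, rfl⟩ := hw
    have hsubρ : ball z₀ ρ ⊆ ball z₀ (2*r) := ball_subset_ball hρ2
    have hbound : ∀ x ∈ ball z₀ ρ, ‖deriv g x‖ ≤ c := by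
      intro x hx
      have hxη : x ∈ ball z₀ η := hsubη (hsubρ hx)
      have hlog := hlip x hxη
      have hlx : Real.log ‖deriv g x‖ ≤ L * ‖x - z₀‖ := le_trans (le_abs_self _) hlog
      have hnx : ‖x - z₀‖ < 2*r := by
        rw [← dist_eq_norm]; exact lt_of_lt_of_le (mem_ball.mp hx) hρ2
      have hLx : L * ‖x - z₀‖ ≤ 2 * L * r := by nlinarith
      rcases eq_or_ne (deriv g x) 0 with h0 | h0
      · simp [h0]; exact le_of_lt hc0
      · have heq : ‖deriv g x‖ = Real.exp (Real.log ‖deriv g x‖) :=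
          (Real.exp_log (norm_pos_iff.mpr h0)).symm
        rw [heq, hcdef]
        exact Real.exp_le_exp.mpr (le_trans hlx hLx)
    have hdiff : ∀ x ∈ ball z₀ ρ, DifferentiableAt ℂ g x := fun x hx =>
      hg.differentiableAt (hU.mem_nhds (hsubU (hsubρ hx)))
    have hmv := Convex.norm_image_sub_le_of_norm_deriv_le hdiff hbound
      (convex_ball z₀ ρ) (mem_ball_self hρ) hz
    rw [hfix] at hmv
    rw [mem_ball, dist_eq_norm]
    calc ‖g z - z₀‖ ≤ c * ‖z - z₀‖ := hmv
      _ < c * ρ := by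
          apply mul_lt_mul_of_pos_left _ hc0
          rw [← dist_eq_norm]; exact mem_ball.mp hz
  -- iterate
  have hiter : ∀ k : ℕ, k ≤ n → g^[k] '' ball z₀ r ⊆ ball z₀ (r * c ^ k) := by
    intro k
    induction k with
    | zero => simp
    | succ k ih =>
      intro hk
      have hk' : k ≤ n := Nat.le_of_succ_le hk
      have hckn : c ^ k ≤ c ^ n := pow_le_pow_right₀ hc1 hk'
      have hck2 : r * c ^ k ≤ 2 * r := by nlinarith [pow_pos hc0 k]
      have hckpos : 0 < r * c ^ k := by positivity
      calc g^[k+1] '' ball z₀ r = g '' (g^[k] '' ball z₀ r) := by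
            rw [Function.iterate_succ', Set.image_comp]
        _ ⊆ g '' ball z₀ (r * c ^ k) := Set.image_mono (ih hk')
        _ ⊆ ball z₀ (c * (r * c ^ k)) := hstep _ hckpos hck2
        _ = ball z₀ (r * c ^ (k+1)) := by rw [pow_succ]; ring_nf
  refine subset_trans (hiter i hin) (ball_subset_ball ?_)
  have : c ^ i ≤ c ^ n := pow_le_pow_right₀ hc1 hin
  nlinarith
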